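/- Let B be a crossed product of an F-algebra A with a finite group G whose order is invertible in F. If M is a B-module whose restriction to A is semisimple as an A-module, then M is semisimple as a B-module. -/

import Mathlib

open DirectSum

lemma crossedProduct_maschke_inv_mem {F B ι : Type*} [Field F] [Ring B] [Algebra F B]
    [AddGroup ι] [DecidableEq ι] (ℬ : ι → Submodule F B) [GradedRing ℬ]
    {i : ι} {u : Bˣ} (hu : (u : B) ∈ ℬ i) : ((u⁻¹ : Bˣ) : B) ∈ ℬ (-i) := by
  set w : B := (DirectSum.decompose ℬ ((u⁻¹ : Bˣ) : B) (-i) : B) with hw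
  have h2 : (1 : B) = w * u := by
    have := DirectSum.coe_decompose_mul_add_of_right_mem ℬ (a := ((u⁻¹ : Bˣ) : B)) (i := -i) hu
    rw [Units.inv_mul, neg_add_cancel] at this
    rw [DirectSum.decompose_of_mem_same ℬ (SetLike.one_mem_graded ℬ)] at this
    exact this
  have : ((u⁻¹ : Bˣ) : B) = w := by
    calc ((u⁻¹ : Bˣ) : B) = (w * u) * ((u⁻¹ : Bˣ) : B) := by rw [← h2, one_mul]
    _ = w := by rw [mul_assoc, Units.mul_inv, mul_one]
  rw [this]
  exact SetLike.coe_mem _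



/-- Maschke theory for crossed products: if `B = ⊕_{x ∈ G} 𝒜 x` is a crossed product of
the `F`-algebra `A = 𝒜 1` with a finite group `G` whose order is invertible in `F`,
then every `B`-module whose restriction to `A` is semisimple is semisimple over `B`. -/
theorem crossedProduct_maschke
    {F : Type*} [Field F] {G : Type*} [Group G] [Finite G] [DecidableEq G]
    {B : Type*} [Ring B] [Algebra F B]
    (𝒜 : G → Submodule F B)
    (hone : (1 : B) ∈ 𝒜 1)
    (hmul : ∀ x y : G, ∀ a ∈ 𝒜 x, ∀ b ∈ 𝒜 y, a * b ∈ 𝒜 (x * y))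
    (hinternal : DirectSum.IsInternal 𝒜)
    (hcross : ∀ x : G, ∃ u ∈ 𝒜 x, IsUnit u)
    (hinv : (Nat.card G : F) ≠ 0)
    (A : Type*) [Ring A] [Algebra F A]
    (ι : A →ₐ[F] B) (hι : Function.Injective ι)
    (hrange : Subalgebra.toSubmodule ι.range = 𝒜 1)
    (M : Type*) [AddCommGroup M] [Module B M] [Module A M]
    (hcompat : ∀ (a : A) (m : M), a • m = ι a • m)
    (hM : IsSemisimpleModule A M) :
    IsSemisimpleModule B M := by
  haveI := Fintype.ofFinite G
  -- graded ring structure over `Additive G`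
  let ℬ : Additive G → Submodule F B := fun g => 𝒜 g.toMul
  have hBint : DirectSum.IsInternal ℬ := hinternal
  haveI : SetLike.GradedMonoid ℬ :=
    { one_mem := hone
      mul_mem := fun {x y} a b ha hb => hmul _ _ a ha b hb }
  haveI : DirectSum.Decomposition ℬ := hBint.chooseDecomposition
  haveI : GradedRing ℬ := ⟨⟩
  -- choose homogeneous units
  choose u₀ hu₀ hunit using hcross
  let U : G → Bˣ := fun x => (hunit x).unit
  have hU : ∀ x, (U x : B) ∈ 𝒜 x := fun x => by
    show ((hunit x).unit : B) ∈ 𝒜 x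
    rw [(hunit x).unit_spec]; exact hu₀ x
  have hUinv : ∀ x, (((U x)⁻¹ : Bˣ) : B) ∈ 𝒜 x⁻¹ := fun x =>
    crossedProduct_maschke_inv_mem ℬ (i := Additive.ofMul x) (hU x)
  let v : G → B := fun x => (((U x)⁻¹ : Bˣ) : B)
  -- scalar used for averaging
  let c : B := algebraMap F B ((Nat.card G : F)⁻¹)
  refine (isSemisimpleModule_iff B M).mpr ⟨?_⟩
  intro N
  -- N as an A-submodule
  let N_A : Submodule A M :=
    { carrier := N
      add_mem' := fun h h' => N.add_mem h h'
      zero_mem' := N.zero_mem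
      smul_mem' := fun a m hm => by
        show a • m ∈ N
        rw [hcompat]; exact N.smul_mem _ hm }
  obtain ⟨Q, hQ⟩ := hM.exists_isCompl N_A
  let p : M →ₗ[A] M := N_A.subtype ∘ₗ Submodule.linearProjOfIsCompl N_A Q hQ
  have hpmem : ∀ m : M, p m ∈ N := fun m => (Submodule.linearProjOfIsCompl N_A Q hQ m).2
  have hpn : ∀ n ∈ N, p n = n := fun n hn => by
    show (Submodule.linearProjOfIsCompl N_A Q hQ n : M) = n
    exact congrArg Subtype.val (Submodule.linearProjOfIsCompl_apply_left hQ ⟨n, hn⟩)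
  -- the averaged map (unnormalized)
  let S : M → M := fun m => ∑ x : G, (U x : B) • p (v x • m)
  have hSadd : ∀ m m', S (m + m') = S m + S m' := fun m m' => by
    simp only [S, smul_add, map_add, Finset.sum_add_distrib]
  have hS0 : S 0 = 0 := by simp [S]
  have hSmem : ∀ m, S m ∈ N := fun m =>
    N.sum_mem fun x _ => N.smul_mem _ (hpmem _)
  -- key computation for homogeneous b
  have hkey : ∀ (y : G), ∀ b ∈ 𝒜 y, ∀ m : M, S (b • m) = b • S m := by
    intro y b hb m
    have step : ∀ x : G, (U x : B) • p (v x • (b • m))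
        = b • ((U (y⁻¹ * x) : B) • p (v (y⁻¹ * x) • m)) := by
      intro x
      set w := y⁻¹ * x with hwdef
      have ha : v x * b * (U w : B) ∈ 𝒜 1 := by
        have h1 := hmul _ _ _ (hUinv x) b hb
        have h2 := hmul _ _ _ h1 _ (hU w)
        have : x⁻¹ * y * (y⁻¹ * x) = 1 := by group
        rwa [this] at h2
      rw [← hrange] at ha
      obtain ⟨a', ha'⟩ := ha
      have ha'' : ι a' = v x * b * (U w : B) := ha'
      have e1 : v x * b = ι a' * v w := by
        rw [ha'']
        calc v x * b = v x * b * (U w : B) * v w := by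
              rw [mul_assoc (v x * b) (U w : B) (v w)]
              show v x * b = v x * b * ((U w : B) * ((U w)⁻¹ : Bˣ))
              rw [Units.mul_inv, mul_one]
        _ = _ := rfl
      have e2 : (U x : B) * (ι a') = b * (U w : B) := by
        rw [ha'']
        show (U x : B) * ((((U x)⁻¹ : Bˣ) : B) * b * (U w : B)) = b * (U w : B)
        rw [← mul_assoc, ← mul_assoc, Units.mul_inv, one_mul]
      calc (U x : B) • p (v x • (b • m))
          = (U x : B) • p ((v x * b) • m) := by rw [mul_smul]
        _ = (U x : B) • p ((ι a') • (v w • m)) := by rw [e1, mul_smul]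
        _ = (U x : B) • p (a' • (v w • m)) := by rw [hcompat]
        _ = (U x : B) • (a' • p (v w • m)) := by rw [map_smul]
        _ = (U x : B) • ((ι a') • p (v w • m)) := by rw [hcompat]
        _ = ((U x : B) * ι a') • p (v w • m) := by rw [mul_smul]
        _ = (b * (U w : B)) • p (v w • m) := by rw [e2]
        _ = b • ((U w : B) • p (v w • m)) := by rw [mul_smul]
    calc S (b • m) = ∑ x : G, b • ((U (y⁻¹ * x) : B) • p (v (y⁻¹ * x) • m)) := by
          exact Finset.sum_congr rfl fun x _ => step x
      _ = b • ∑ x : G, (U (y⁻¹ * x) : B) • p (v (y⁻¹ * x) • m) := by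
          rw [Finset.smul_sum]
      _ = b • S m := by
          congr 1
          exact Equiv.sum_comp (Equiv.mulLeft y⁻¹) fun z => (U z : B) • p (v z • m)
  have hsmul : ∀ (b : B) (m : M), S (b • m) = b • S m := by
    intro b m
    have hb : b ∈ (⊤ : Submodule F B) := trivial
    rw [← hinternal.submodule_iSup_eq_top] at hb
    exact Submodule.iSup_induction 𝒜 (motive := fun b => S (b • m) = b • S m) hb
      (fun y b hby => hkey y b hby m)
      (by show S ((0 : B) • m) = (0 : B) • S m
          rw [zero_smul, zero_smul, hS0])
      (fun b b' ihb ihb' => by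
        show S ((b + b') • m) = (b + b') • S m
        have ihb2 : S (b • m) = b • S m := ihb
        have ihb2' : S (b' • m) = b' • S m := ihb'
        rw [add_smul, add_smul, hSadd, ihb2, ihb2'])
  -- bundle into a B-linear projection onto N
  let f : M →ₗ[B] M :=
    { toFun := fun m => c • S m
      map_add' := fun m m' => by
        show c • S (m + m') = c • S m + c • S m'
        rw [hSadd, smul_add]
      map_smul' := fun b m => by
        show c • S (b • m) = b • (c • S m)
        rw [hsmul b m, smul_smul, smul_smul]
        congr 1
        show algebraMap F B ((Nat.card G : F)⁻¹) * b = b * algebraMap F B ((Nat.card G : F)⁻¹)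
        exact Algebra.commutes _ b }
  have hfmem : ∀ m, f m ∈ N := fun m => N.smul_mem _ (hSmem m)
  have hfix : ∀ n ∈ N, f n = n := by
    intro n hn
    have hterm : ∀ x : G, (U x : B) • p (v x • n) = n := by
      intro x
      have hvn : v x • n ∈ N := N.smul_mem _ hn
      rw [hpn _ hvn, smul_smul]
      show ((U x : B) * (((U x)⁻¹ : Bˣ) : B)) • n = n
      rw [Units.mul_inv, one_smul]
    have hSn : S n = (Nat.card G : B) • n := by
      show ∑ x : G, (U x : B) • p (v x • n) = (Nat.card G : B) • n
      rw [Finset.sum_congr rfl fun x _ => hterm x]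
      rw [Finset.sum_const, Nat.card_eq_fintype_card, Finset.card_univ,
        Nat.cast_smul_eq_nsmul]
    show c • S n = n
    rw [hSn, smul_smul]
    have : c * (Nat.card G : B) = 1 := by
      show algebraMap F B ((Nat.card G : F)⁻¹) * (Nat.card G : B) = 1
      rw [← map_natCast (algebraMap F B) (Nat.card G), ← map_mul,
        inv_mul_cancel₀ hinv, map_one]
    rw [this, one_smul]
  let π : M →ₗ[B] N := f.codRestrict N hfmem
  have hπ : ∀ x : N, π x = x := fun x => Subtype.ext (hfix x x.2)
  exact ⟨LinearMap.ker π, (LinearMap.isCompl_of_proj hπ)⟩
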